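/- For any integer r > 1, n₂*(2r+1) ≤ 2·n₂(r−1) + 2·n₂(r) + 4. -/
import Mathlib


open Pointwise

/-- `IsBasisRange k n` : there is an additive 2-basis `{0 = a₀ < ⋯ < a_k}`
of nonnegative integers whose sumset covers `[0, n]`. -/
def IsBasisRange (k n : ℕ) : Prop :=
  ∃ a : ℕ → ℕ, a 0 = 0 ∧ (∀ m < k, a m < a (m + 1)) ∧
    Finset.Icc 0 n ⊆ ((Finset.range (k + 1)).image a) + ((Finset.range (k + 1)).image a)

/-- `n2max k` is the maximal range of an additive 2-basis with `k` nonzero elements. -/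
noncomputable def n2max (k : ℕ) : ℕ := sSup {n | IsBasisRange k n}

/-- `IsRestrictedBasisRange k n` : there is a restricted basis of length `k`
with range `n = 2 a_k`. -/
def IsRestrictedBasisRange (k n : ℕ) : Prop :=
  ∃ a : ℕ → ℕ, a 0 = 0 ∧ (∀ m < k, a m < a (m + 1)) ∧
    Finset.Icc 0 n ⊆ ((Finset.range (k + 1)).image a) + ((Finset.range (k + 1)).image a) ∧
    n = 2 * a k

/-- `n2star k` is the maximal range among restricted bases of length `k`. -/
noncomputable def n2star (k : ℕ) : ℕ := sSup {n | IsRestrictedBasisRange k n}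

/-- A step-increasing function up to `k` is monotone on `[0,k]`. -/
lemma mono_aux {a : ℕ → ℕ} {k : ℕ} (h : ∀ m < k, a m < a (m + 1)) :
    ∀ i j, i ≤ j → j ≤ k → a i ≤ a j := by
  intro i j hij hjk
  induction j with
  | zero => simp [Nat.le_zero.mp hij]
  | succ n ih =>
    rcases Nat.eq_or_lt_of_le hij with rfl | h'
    · exact le_refl _
    · exact (ih (by omega) (by omega)).trans (h n (by omega)).le

/-- Strict version of `mono_aux`. -/
lemma smono_aux {a : ℕ → ℕ} {k : ℕ} (h : ∀ m < k, a m < a (m + 1)) :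
    ∀ i j, i < j → j ≤ k → a i < a j := by
  intro i j hij hjk
  have h1 : a i ≤ a (j - 1) := mono_aux h i (j - 1) (by omega) (by omega)
  have h2 : a (j - 1) < a (j - 1 + 1) := h (j - 1) (by omega)
  have h3 : j - 1 + 1 = j := by omega
  rw [h3] at h2
  exact lt_of_le_of_lt h1 h2

/-- The set of ranges achievable with a basis of length `k` is bounded above. -/
lemma bddAbove_isBasisRange (k : ℕ) : BddAbove {n | IsBasisRange k n} := by
  refine ⟨(k + 1) * (k + 1), ?_⟩
  rintro n ⟨a, -, -, hcov⟩
  have h1 : (Finset.Icc 0 n).card ≤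
      (((Finset.range (k + 1)).image a) + ((Finset.range (k + 1)).image a)).card :=
    Finset.card_le_card hcov
  have h2 : (((Finset.range (k + 1)).image a) + ((Finset.range (k + 1)).image a)).card ≤
      ((Finset.range (k + 1)).image a).card * ((Finset.range (k + 1)).image a).card :=
    Finset.card_add_le
  have h3 : ((Finset.range (k + 1)).image a).card ≤ k + 1 :=
    Finset.card_image_le.trans_eq (by simp)
  have h4 := h1.trans (h2.trans (Nat.mul_le_mul h3 h3))
  simp [Nat.card_Icc] at h4
  omega

theorem n2star_odd_upper_bound (r : ℕ) (hr : 1 < r) :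
    n2star (2 * r + 1) ≤ 2 * n2max (r - 1) + 2 * n2max r + 4 := by
  refine csSup_le' ?_
  rintro n ⟨a, h0, hinc, hcov, hn⟩
  have mono := mono_aux hinc
  have smono := smono_aux hinc
  -- basic facts
  have ha1 : 0 < a (r + 1) := by
    have := smono 0 (r + 1) (by omega) (by omega)
    omega
  have haK : a (r + 1) < a (2 * r + 1) := smono (r + 1) (2 * r + 1) (by omega) (by omega)
  -- Lower part: a₀,…,a_r form a basis covering [0, a_{r+1} - 1]
  have h1 : IsBasisRange r (a (r + 1) - 1) := by
    refine ⟨a, h0, fun m hm => hinc m (by omega), ?_⟩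
    intro x hx
    rw [Finset.mem_Icc] at hx
    have hxn : x ∈ Finset.Icc 0 n := by
      rw [Finset.mem_Icc]
      omega
    obtain ⟨u, hu, v, hv, huv⟩ := Finset.mem_add.mp (hcov hxn)
    obtain ⟨i, hi, rfl⟩ := Finset.mem_image.mp hu
    obtain ⟨j, hj, rfl⟩ := Finset.mem_image.mp hv
    rw [Finset.mem_range] at hi hj
    have hir : i ≤ r := by
      by_contra hc
      have := mono (r + 1) i (by omega) (by omega)
      omega
    have hjr : j ≤ r := by
      by_contra hc
      have := mono (r + 1) j (by omega) (by omega)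
      omega
    exact Finset.mem_add.mpr ⟨a i, Finset.mem_image.mpr ⟨i, Finset.mem_range.mpr (by omega), rfl⟩,
      a j, Finset.mem_image.mpr ⟨j, Finset.mem_range.mpr (by omega), rfl⟩, huv⟩
  -- Upper part: reflected top r elements form a basis of length r-1
  have h2 : IsBasisRange (r - 1) (a (2 * r + 1) - a (r + 1) - 1) := by
    refine ⟨fun i => a (2 * r + 1) - a (2 * r + 1 - i), by simp, ?_, ?_⟩
    · intro m hm
      have e1 : a (2 * r + 1 - (m + 1)) < a (2 * r + 1 - m) :=
        smono _ _ (by omega) (by omega)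
      have e2 : a (2 * r + 1 - m) ≤ a (2 * r + 1) := mono _ _ (by omega) (by omega)
      show a (2 * r + 1) - a (2 * r + 1 - m) < a (2 * r + 1) - a (2 * r + 1 - (m + 1))
      omega
    · intro y hy
      rw [Finset.mem_Icc] at hy
      have hxn : 2 * a (2 * r + 1) - y ∈ Finset.Icc 0 n := by
        rw [Finset.mem_Icc]
        omega
      obtain ⟨u, hu, v, hv, huv⟩ := Finset.mem_add.mp (hcov hxn)
      obtain ⟨i, hi, rfl⟩ := Finset.mem_image.mp hu
      obtain ⟨j, hj, rfl⟩ := Finset.mem_image.mp hv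
      rw [Finset.mem_range] at hi hj
      have hik : a i ≤ a (2 * r + 1) := mono i _ (by omega) (by omega)
      have hjk : a j ≤ a (2 * r + 1) := mono j _ (by omega) (by omega)
      have hia : a (r + 1) < a i := by omega
      have hja : a (r + 1) < a j := by omega
      have hir : r + 2 ≤ i := by
        by_contra hc
        have := mono i (r + 1) (by omega) (by omega)
        omega
      have hjr : r + 2 ≤ j := by
        by_contra hc
        have := mono j (r + 1) (by omega) (by omega)
        omega
      refine Finset.mem_add.mpr ⟨a (2 * r + 1) - a (2 * r + 1 - (2 * r + 1 - i)),
        Finset.mem_image.mpr ⟨2 * r + 1 - i, Finset.mem_range.mpr (by omega), rfl⟩,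
        a (2 * r + 1) - a (2 * r + 1 - (2 * r + 1 - j)),
        Finset.mem_image.mpr ⟨2 * r + 1 - j, Finset.mem_range.mpr (by omega), rfl⟩, ?_⟩
      have e1 : 2 * r + 1 - (2 * r + 1 - i) = i := by omega
      have e2 : 2 * r + 1 - (2 * r + 1 - j) = j := by omega
      rw [e1, e2]
      omega
  have hb1 : a (r + 1) - 1 ≤ n2max r := le_csSup (bddAbove_isBasisRange r) h1
  have hb2 : a (2 * r + 1) - a (r + 1) - 1 ≤ n2max (r - 1) :=
    le_csSup (bddAbove_isBasisRange (r - 1)) h2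
  omega
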